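/- Let α, β ∈ [0,1] and consider the SCM of the SIR model (Figure 5) viewed as a Markov chain, with counters (s, i, r, a0, a1, b0, b1), where per susceptible individual the infection loop succeeds (no infection) with per-contact probability α repeated i times, so each susceptible becomes infected with probability 1 − α^i and is recorded in b0, and each of the i infectious individuals recovers with probability β and is recorded in b1, after which the counters are updated to (s − b0, i + b0 − b1, r + b1) and the machine returns to q0 with a0 = a1 = b0 = b1 = 0. Then, started at q0 with counters (s, i, r, 0, 0, 0, 0), for all b0 ≤ s and b1 ≤ i, the probability that the first return to q0 has counters (s − b0, i + b0 − b1, r + b1, 0, 0, 0, 0) equals Pr(b0; s, 1 − α^i) · Pr(b1; i, β); that is, b0 is distributed as B(s, 1 − α^i), b1 is independently distributed as B(i, β), and one traversal from q0 back to q0 simulates exactly one time-step of the stochastic SIR compartmental model with these rates. -/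

import Mathlib

/-- Probability of a finite path: starting at `s`, then visiting the states in `l` in order. -/
def pathProb {S : Type} (P : S → S → ℝ) : S → List S → ℝ
  | _, [] => 1
  | s, t :: l => P s t * pathProb P t l

/-- `FirstHit s s' l` holds iff the path `s :: l` visits `s'` exactly once, as its last state. -/
def FirstHit {S : Type} (s s' : S) (l : List S) : Prop :=
  (l = [] ∧ s = s') ∨ (s ≠ s' ∧ l.getLast? = some s' ∧ ∀ t ∈ l.dropLast, t ≠ s')

open Classical in
/-- Probability of eventually reaching `s'` from `s`: the sum over all finite paths
from `s` to `s'` that visit `s'` only as their last state of the path probabilities. -/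
noncomputable def reachProb {S : Type} (P : S → S → ℝ) (s s' : S) : ℝ :=
  ∑' l : List S, if FirstHit s s' l then pathProb P s l else 0

/-- `IsPath P s l` holds iff every step of the path `s :: l` has positive probability. -/
def IsPath {S : Type} (P : S → S → ℝ) : S → List S → Prop
  | _, [] => True
  | s, t :: l => 0 < P s t ∧ IsPath P t l
/-- The control states `q0, …, q5` of the SCM of the SIR model. -/
inductive SCtl
  | q0 | q1 | q2 | q3 | q4 | q5
  deriving DecidableEq

/-- The seven counters `(s, i, r, a0, a1, b0, b1)` of the SCM of the SIR model. -/
structure Cnt where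
  s : ℕ
  i : ℕ
  r : ℕ
  a0 : ℕ
  a1 : ℕ
  b0 : ℕ
  b1 : ℕ
  deriving DecidableEq

/-- States of the SIR SCM viewed as a Markov chain. -/
abbrev SirSt := SCtl × Cnt

/-- Transition probabilities of the SCM of the SIR model with per-contact no-infection
probability `α` and recovery probability `β`:
* from `q0` it loads `a0 ← s` and moves to `q1`;
* in `q1`, if `a0 > 0` it decrements `a0`, loads `a1 ← i`, and moves to `q2`;
  if `a0 = 0` it moves to `q3`;
* in `q2` (the per-susceptible infection loop), if `a1 > 0` it stays in `q2` with
  probability `α` decrementing `a1`, and with probability `1 - α` increments `b0` and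
  exits to `q1`; if `a1 = 0` it exits to `q1`;
* from `q3` it loads `a1 ← i` and moves to `q4`;
* in `q4` (the recovery loop), while `a1 > 0`, with probability `β` it increments `b1`
  and decrements `a1`, and with probability `1 - β` it just decrements `a1`;
  if `a1 = 0` it moves to `q5`;
* from `q5` it updates `s ← s - b0`, `i ← i + b0 - b1`, `r ← r + b1`, resets
  `b0 ← 0`, `b1 ← 0`, and returns to `q0`. -/
def sirP (α β : ℝ) : SirSt → SirSt → ℝ
  | (SCtl.q0, c), s' => if s' = (SCtl.q1, { c with a0 := c.s }) then 1 else 0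
  | (SCtl.q1, c), s' =>
      match c.a0 with
      | 0 => if s' = (SCtl.q3, c) then 1 else 0
      | a0' + 1 => if s' = (SCtl.q2, { c with a0 := a0', a1 := c.i }) then 1 else 0
  | (SCtl.q2, c), s' =>
      match c.a1 with
      | 0 => if s' = (SCtl.q1, c) then 1 else 0
      | a1' + 1 =>
          if s' = (SCtl.q2, { c with a1 := a1' }) then α
          else if s' = (SCtl.q1, { c with b0 := c.b0 + 1 }) then 1 - α
          else 0
  | (SCtl.q3, c), s' => if s' = (SCtl.q4, { c with a1 := c.i }) then 1 else 0
  | (SCtl.q4, c), s' =>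
      match c.a1 with
      | 0 => if s' = (SCtl.q5, c) then 1 else 0
      | a1' + 1 =>
          if s' = (SCtl.q4, { c with a1 := a1', b1 := c.b1 + 1 }) then β
          else if s' = (SCtl.q4, { c with a1 := a1' }) then 1 - β
          else 0
  | (SCtl.q5, c), s' =>
      if s' = (SCtl.q0, { s := c.s - c.b0, i := c.i + c.b0 - c.b1, r := c.r + c.b1,
                          a0 := c.a0, a1 := c.a1, b0 := 0, b1 := 0 }) then 1 else 0

open Classical in
/-- The probability, starting from state `st`, that the first visit to a `q0`-state
is at the state `tgt`: the sum over all finite paths from `st` to `tgt` whose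
intermediate states all have control state different from `q0`. -/
noncomputable def firstReturnProb (α β : ℝ) (st tgt : SirSt) : ℝ :=
  ∑' l : List SirSt,
    if l.getLast? = some tgt ∧ ∀ u ∈ l.dropLast, u.1 ≠ SCtl.q0 then
      pathProb (sirP α β) st l
    else 0

/-- The binomial probability `Pr(k; n, p) = C(n,k) · p^k · (1-p)^(n-k)` of exactly `k`
successes among `n` independent Bernoulli trials with success probability `p`. -/
noncomputable def binomPMF (k n : ℕ) (p : ℝ) : ℝ :=
  (n.choose k : ℝ) * p ^ k * (1 - p) ^ (n - k)

/-! ### Auxiliary development -/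

namespace SirAux

/-- The (at most two) possible successors of a state. -/
def succs : SirSt → Finset SirSt
  | (SCtl.q0, c) => {(SCtl.q1, { c with a0 := c.s })}
  | (SCtl.q1, c) =>
      match c.a0 with
      | 0 => {(SCtl.q3, c)}
      | a0' + 1 => {(SCtl.q2, { c with a0 := a0', a1 := c.i })}
  | (SCtl.q2, c) =>
      match c.a1 with
      | 0 => {(SCtl.q1, c)}
      | a1' + 1 => {(SCtl.q2, { c with a1 := a1' }), (SCtl.q1, { c with b0 := c.b0 + 1 })}
  | (SCtl.q3, c) => {(SCtl.q4, { c with a1 := c.i })}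
  | (SCtl.q4, c) =>
      match c.a1 with
      | 0 => {(SCtl.q5, c)}
      | a1' + 1 =>
          {(SCtl.q4, { c with a1 := a1', b1 := c.b1 + 1 }), (SCtl.q4, { c with a1 := a1' })}
  | (SCtl.q5, c) =>
      {(SCtl.q0, { s := c.s - c.b0, i := c.i + c.b0 - c.b1, r := c.r + c.b1,
                   a0 := c.a0, a1 := c.a1, b0 := 0, b1 := 0 })}

lemma mem_succs {α β : ℝ} {st u : SirSt} (h : sirP α β st u ≠ 0) : u ∈ succs st := by
  obtain ⟨q, c⟩ := st
  obtain ⟨cs, ci, cr, ca0, ca1, cb0, cb1⟩ := c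
  cases q
  · simp only [sirP] at h
    split_ifs at h with h1
    · exact h1 ▸ Finset.mem_singleton_self _
    · exact absurd rfl h
  · cases ca0 <;> simp only [sirP] at h <;> split_ifs at h with h1 <;>
      first
        | exact h1 ▸ Finset.mem_singleton_self _
        | exact absurd rfl h
  · cases ca1 <;> simp only [sirP] at h <;> split_ifs at h with h1 h2 <;>
      first
        | exact h1 ▸ Finset.mem_singleton_self _
        | exact h1 ▸ Finset.mem_insert_self _ _
        | exact h2 ▸ Finset.mem_insert_of_mem (Finset.mem_singleton_self _)
        | exact absurd rfl h
  · simp only [sirP] at h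
    split_ifs at h with h1
    · exact h1 ▸ Finset.mem_singleton_self _
    · exact absurd rfl h
  · cases ca1 <;> simp only [sirP] at h <;> split_ifs at h with h1 h2 <;>
      first
        | exact h1 ▸ Finset.mem_singleton_self _
        | exact h1 ▸ Finset.mem_insert_self _ _
        | exact h2 ▸ Finset.mem_insert_of_mem (Finset.mem_singleton_self _)
        | exact absurd rfl h
  · simp only [sirP] at h
    split_ifs at h with h1
    · exact h1 ▸ Finset.mem_singleton_self _
    · exact absurd rfl h

/-- All lists of length `≤ n` that can be genuine paths from a given state. -/
def pathsLe : ℕ → SirSt → Finset (List SirSt)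
  | 0, _ => {[]}
  | n + 1, st => insert [] ((succs st).biUnion fun u => (pathsLe n u).image (u :: ·))

lemma mem_pathsLe {α β : ℝ} :
    ∀ {l : List SirSt} {n : ℕ} {st : SirSt}, pathProb (sirP α β) st l ≠ 0 →
      l.length ≤ n → l ∈ pathsLe n st := by
  intro l
  induction l with
  | nil =>
      intro n st _ _
      cases n <;> simp [pathsLe]
  | cons u t ih =>
      intro n st hp hlen
      cases n with
      | zero => simp at hlen
      | succ m =>
          have h1 : sirP α β st u ≠ 0 := fun h => hp (by simp [pathProb, h])
          have h2 : pathProb (sirP α β) u t ≠ 0 := fun h => hp (by simp [pathProb, h])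
          have hm : t ∈ pathsLe m u := ih h2 (by simpa using hlen)
          simp only [pathsLe, Finset.mem_insert, Finset.mem_biUnion, Finset.mem_image]
          exact Or.inr ⟨u, mem_succs h1, t, hm, rfl⟩

/-- A rank function decreasing along transitions that avoid `q0`. -/
def rank : SirSt → ℕ
  | (SCtl.q5, _) => 1
  | (SCtl.q4, c) => 2 + c.a1
  | (SCtl.q3, c) => 3 + c.i
  | (SCtl.q1, c) => 4 + c.i + c.a0 * (c.i + 2)
  | (SCtl.q2, c) => 5 + c.i + c.a0 * (c.i + 2) + c.a1
  | (SCtl.q0, c) => 5 + c.i + c.s * (c.i + 2)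

lemma rank_pos (st : SirSt) : 1 ≤ rank st := by
  obtain ⟨q, c⟩ := st
  cases q <;> simp only [rank] <;> omega

lemma rank_lt {α β : ℝ} {st u : SirSt} (h : sirP α β st u ≠ 0) (hu : u.1 ≠ SCtl.q0) :
    rank u < rank st := by
  obtain ⟨q, c⟩ := st
  obtain ⟨cs, ci, cr, ca0, ca1, cb0, cb1⟩ := c
  cases q
  · simp only [sirP] at h
    split_ifs at h with h1
    · subst h1; simp only [rank]; omega
    · exact absurd rfl h
  · cases ca0 with
    | zero =>
        simp only [sirP] at h
        split_ifs at h with h1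
        · subst h1; simp only [rank]; omega
        · exact absurd rfl h
    | succ k =>
        simp only [sirP] at h
        split_ifs at h with h1
        · subst h1; simp only [rank, Nat.succ_mul]; omega
        · exact absurd rfl h
  · cases ca1 with
    | zero =>
        simp only [sirP] at h
        split_ifs at h with h1
        · subst h1; simp only [rank]; omega
        · exact absurd rfl h
    | succ k =>
        simp only [sirP] at h
        split_ifs at h with h1 h2
        · subst h1; simp only [rank]; omega
        · subst h2; simp only [rank]; omega
        · exact absurd rfl h
  · simp only [sirP] at h
    split_ifs at h with h1
    · subst h1; simp only [rank]; omega
    · exact absurd rfl h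
  · cases ca1 with
    | zero =>
        simp only [sirP] at h
        split_ifs at h with h1
        · subst h1; simp only [rank]; omega
        · exact absurd rfl h
    | succ k =>
        simp only [sirP] at h
        split_ifs at h with h1 h2
        · subst h1; simp only [rank]; omega
        · subst h2; simp only [rank]; omega
        · exact absurd rfl h
  · simp only [sirP] at h
    split_ifs at h with h1
    · subst h1; exact absurd rfl hu
    · exact absurd rfl h

/-- The summand of `firstReturnProb` (with decidable instances). -/
noncomputable def gfun (α β : ℝ) (tgt st : SirSt) (l : List SirSt) : ℝ :=
  if l.getLast? = some tgt ∧ ∀ u ∈ l.dropLast, u.1 ≠ SCtl.q0 then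
    pathProb (sirP α β) st l
  else 0

lemma firstReturnProb_eq (α β : ℝ) (st tgt : SirSt) :
    firstReturnProb α β st tgt = ∑' l, gfun α β tgt st l := by
  refine tsum_congr fun l => ?_
  exact if_congr Iff.rfl rfl rfl

lemma gfun_nil (α β : ℝ) (tgt st : SirSt) : gfun α β tgt st [] = 0 := by
  simp [gfun]

/-- Auxiliary "after one step" summand. -/
noncomputable def hfun (α β : ℝ) (tgt u : SirSt) (l : List SirSt) : ℝ :=
  if l = [] then (if u = tgt then 1 else 0)
  else if u.1 = SCtl.q0 then 0 else gfun α β tgt u l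

lemma gfun_cons (α β : ℝ) (tgt st u : SirSt) (l : List SirSt) :
    gfun α β tgt st (u :: l) = sirP α β st u * hfun α β tgt u l := by
  cases l with
  | nil =>
      simp only [gfun, hfun, List.getLast?_singleton, List.dropLast_singleton,
        List.not_mem_nil, false_implies, implies_true, and_true, Option.some.injEq,
        if_true, pathProb]
      split_ifs <;> ring
  | cons v t =>
      simp only [gfun, hfun, List.getLast?_cons_cons, List.dropLast_cons₂,
        List.mem_cons, pathProb, reduceCtorEq, if_false]
      by_cases h0 : u.1 = SCtl.q0
      · rw [if_pos h0]
        rw [if_neg]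
        · ring
        · rintro ⟨-, hall⟩
          exact hall u List.mem_cons_self h0
      · rw [if_neg h0]
        by_cases hc : (v :: t).getLast? = some tgt ∧ ∀ w ∈ (v :: t).dropLast, w.1 ≠ SCtl.q0
        · rw [if_pos hc, if_pos ⟨hc.1, fun w hw => ((List.mem_cons.mp hw).elim
            (fun e => e ▸ h0) (hc.2 w))⟩]
        · rw [if_neg hc, if_neg, mul_zero]
          rintro ⟨h1, h2⟩
          exact hc ⟨h1, fun w hw => h2 w (List.mem_cons_of_mem _ hw)⟩

lemma length_le_rank {α β : ℝ} {tgt : SirSt} (htgt : tgt.1 = SCtl.q0) :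
    ∀ {l : List SirSt} {st : SirSt}, gfun α β tgt st l ≠ 0 → l.length ≤ rank st := by
  intro l
  induction l with
  | nil => intro st h; exact absurd (gfun_nil α β tgt st) h
  | cons u t ih =>
      intro st h
      have hcond : (u :: t).getLast? = some tgt ∧ ∀ w ∈ (u :: t).dropLast, w.1 ≠ SCtl.q0 := by
        by_contra hc
        exact h (if_neg hc)
      have hpath : pathProb (sirP α β) st (u :: t) ≠ 0 := by
        intro hp
        exact h (by unfold gfun; rw [hp, ite_self])
      have h1 : sirP α β st u ≠ 0 := fun hh => hpath (by simp [pathProb, hh])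
      have h2 : pathProb (sirP α β) u t ≠ 0 := fun hh => hpath (by simp [pathProb, hh])
      cases t with
      | nil => simpa using rank_pos st
      | cons v t' =>
          have hu0 : u.1 ≠ SCtl.q0 := by
            have := hcond.2 u (by simp [List.dropLast_cons₂])
            exact this
          have hcond' : (v :: t').getLast? = some tgt ∧
              ∀ w ∈ (v :: t').dropLast, w.1 ≠ SCtl.q0 := by
            refine ⟨by simpa [List.getLast?_cons_cons] using hcond.1, fun w hw => ?_⟩
            exact hcond.2 w (by simp [List.dropLast_cons₂, hw])
          have hg : gfun α β tgt u (v :: t') ≠ 0 := by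
            simp only [gfun, if_pos hcond']
            exact h2
          have := ih hg
          have hlt := rank_lt h1 hu0
          simp only [List.length_cons] at this ⊢
          omega

lemma summable_gfun {α β : ℝ} {tgt : SirSt} (htgt : tgt.1 = SCtl.q0) (st : SirSt) :
    Summable (gfun α β tgt st) := by
  apply summable_of_ne_finset_zero (s := pathsLe (rank st) st)
  intro l hl
  by_contra h
  apply hl
  have hpath : pathProb (sirP α β) st l ≠ 0 := by
    intro hp
    exact h (by unfold gfun; rw [hp, ite_self])
  exact mem_pathsLe hpath (length_le_rank htgt h)

lemma hfun_eq_gfun {α β : ℝ} {tgt u : SirSt} (htgt : tgt.1 = SCtl.q0)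
    (hu : u.1 ≠ SCtl.q0) : hfun α β tgt u = gfun α β tgt u := by
  funext l
  cases l with
  | nil =>
      have : u ≠ tgt := fun h => hu (h ▸ htgt)
      simp [hfun, gfun, this]
  | cons v t => simp [hfun, hu]

lemma summable_hfun {α β : ℝ} {tgt : SirSt} (htgt : tgt.1 = SCtl.q0) (u : SirSt) :
    Summable (hfun α β tgt u) := by
  by_cases hu : u.1 = SCtl.q0
  · apply summable_of_ne_finset_zero (s := ({[]} : Finset (List SirSt)))
    intro l hl
    have : l ≠ [] := by simpa using hl
    simp [hfun, this, hu]
  · rw [hfun_eq_gfun htgt hu]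
    exact summable_gfun htgt u

/-- Value of the first-return sum, as a function of the start state. -/
noncomputable def Fv (α β : ℝ) (tgt st : SirSt) : ℝ := ∑' l, gfun α β tgt st l

noncomputable def Hv (α β : ℝ) (tgt u : SirSt) : ℝ := ∑' l, hfun α β tgt u l

lemma Hv_q0 {α β : ℝ} {tgt u : SirSt} (hu : u.1 = SCtl.q0) :
    Hv α β tgt u = if u = tgt then 1 else 0 := by
  rw [Hv, tsum_eq_single ([] : List SirSt)]
  · simp [hfun]
  · intro l hl
    simp [hfun, hl, hu]

lemma Hv_eq_Fv {α β : ℝ} {tgt u : SirSt} (htgt : tgt.1 = SCtl.q0)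
    (hu : u.1 ≠ SCtl.q0) : Hv α β tgt u = Fv α β tgt u := by
  rw [Hv, Fv, hfun_eq_gfun htgt hu]

lemma cons_inj : Function.Injective (fun p : SirSt × List SirSt => p.1 :: p.2) := by
  rintro ⟨a, s⟩ ⟨b, t⟩ h
  simp only [List.cons.injEq] at h
  simp [h.1, h.2]

lemma tsum_gfun_cons (α β : ℝ) (tgt st : SirSt) :
    Fv α β tgt st = ∑' p : SirSt × List SirSt, sirP α β st p.1 * hfun α β tgt p.1 p.2 := by
  rw [Fv, ← Function.Injective.tsum_eq (g := fun p : SirSt × List SirSt => p.1 :: p.2)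
    cons_inj (f := gfun α β tgt st) ?_]
  · exact tsum_congr fun p => gfun_cons α β tgt st p.1 p.2
  · intro l hl
    rcases l with _ | ⟨u, t⟩
    · exact absurd (gfun_nil α β tgt st) hl
    · exact ⟨(u, t), rfl⟩

lemma slice_inj (u : SirSt) : Function.Injective (fun l : List SirSt => ((u, l) : SirSt × List SirSt)) := by
  intro s t h
  simpa using h

lemma Fv_det {α β : ℝ} {tgt : SirSt} (st v : SirSt)
    (hrow : ∀ u, sirP α β st u = if u = v then 1 else 0) :
    Fv α β tgt st = Hv α β tgt v := by
  rw [tsum_gfun_cons]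
  rw [← Function.Injective.tsum_eq (g := fun l : List SirSt => ((v, l) : SirSt × List SirSt))
    (slice_inj v) (f := fun p : SirSt × List SirSt => sirP α β st p.1 * hfun α β tgt p.1 p.2) ?_]
  · rw [Hv]
    refine tsum_congr fun l => ?_
    simp [hrow]
  · rintro ⟨w, l⟩ hw
    simp only [Function.mem_support, ne_eq] at hw
    by_cases h : w = v
    · exact ⟨l, by simp [h]⟩
    · exact absurd (by simp [hrow, h]) hw

lemma Fv_branch {α β : ℝ} {tgt : SirSt} (htgt : tgt.1 = SCtl.q0) (st u v : SirSt)
    (p : ℝ) (huv : u ≠ v)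
    (hrow : ∀ w, sirP α β st w = if w = u then p else if w = v then 1 - p else 0) :
    Fv α β tgt st = p * Hv α β tgt u + (1 - p) * Hv α β tgt v := by
  rw [tsum_gfun_cons]
  set f1 : SirSt × List SirSt → ℝ := fun q => if q.1 = u then p * hfun α β tgt u q.2 else 0
  set f2 : SirSt × List SirSt → ℝ := fun q => if q.1 = v then (1 - p) * hfun α β tgt v q.2 else 0
  have hsplit : ∀ q : SirSt × List SirSt,
      sirP α β st q.1 * hfun α β tgt q.1 q.2 = f1 q + f2 q := by
    rintro ⟨w, l⟩
    simp only [hrow, f1, f2]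
    by_cases h1 : w = u
    · subst h1
      simp [huv]
    · by_cases h2 : w = v
      · subst h2
        simp [h1]
      · simp [h1, h2]
  have hs1 : Summable f1 := by
    rw [← Function.Injective.summable_iff (slice_inj u)]
    · exact ((summable_hfun (α := α) (β := β) htgt u).mul_left p).congr
        fun l => by simp [f1]
    · rintro ⟨w, l⟩ hw
      have hne : w ≠ u := fun h => hw ⟨l, by simp [h]⟩
      simp [f1, hne]
  have hs2 : Summable f2 := by
    rw [← Function.Injective.summable_iff (slice_inj v)]
    · exact ((summable_hfun (α := α) (β := β) htgt v).mul_left (1 - p)).congr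
        fun l => by simp [f2]
    · rintro ⟨w, l⟩ hw
      have hne : w ≠ v := fun h => hw ⟨l, by simp [h]⟩
      simp [f2, hne]
  rw [tsum_congr hsplit, Summable.tsum_add hs1 hs2]
  congr 1
  · rw [← Function.Injective.tsum_eq (g := fun l : List SirSt => ((u, l) : SirSt × List SirSt))
      (slice_inj u) (f := f1) ?_]
    · simp only [f1, if_pos]
      rw [tsum_mul_left, Hv]
    · rintro ⟨w, l⟩ hw
      by_cases h : w = u
      · exact ⟨l, by simp [h]⟩
      · exact absurd (by simp [f1, h]) hw
  · rw [← Function.Injective.tsum_eq (g := fun l : List SirSt => ((v, l) : SirSt × List SirSt))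
      (slice_inj v) (f := f2) ?_]
    · simp only [f2, if_pos]
      rw [tsum_mul_left, Hv]
    · rintro ⟨w, l⟩ hw
      by_cases h : w = v
      · exact ⟨l, by simp [h]⟩
      · exact absurd (by simp [f2, h]) hw

/-! ### Rows of the transition matrix -/

section rows

variable (α β : ℝ)

lemma row_q0 (c : Cnt) :
    ∀ u, sirP α β (SCtl.q0, c) u = if u = (SCtl.q1, { c with a0 := c.s }) then 1 else 0 :=
  fun _ => rfl

lemma row_q1_zero (cs ci cr ca1 cb0 cb1 : ℕ) :
    ∀ u, sirP α β (SCtl.q1, ⟨cs, ci, cr, 0, ca1, cb0, cb1⟩) u =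
      if u = (SCtl.q3, ⟨cs, ci, cr, 0, ca1, cb0, cb1⟩) then 1 else 0 :=
  fun _ => rfl

lemma row_q1_succ (cs ci cr k ca1 cb0 cb1 : ℕ) :
    ∀ u, sirP α β (SCtl.q1, ⟨cs, ci, cr, k + 1, ca1, cb0, cb1⟩) u =
      if u = (SCtl.q2, ⟨cs, ci, cr, k, ci, cb0, cb1⟩) then 1 else 0 :=
  fun _ => rfl

lemma row_q2_zero (cs ci cr ca0 cb0 cb1 : ℕ) :
    ∀ u, sirP α β (SCtl.q2, ⟨cs, ci, cr, ca0, 0, cb0, cb1⟩) u =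
      if u = (SCtl.q1, ⟨cs, ci, cr, ca0, 0, cb0, cb1⟩) then 1 else 0 :=
  fun _ => rfl

lemma row_q2_succ (cs ci cr ca0 m cb0 cb1 : ℕ) :
    ∀ u, sirP α β (SCtl.q2, ⟨cs, ci, cr, ca0, m + 1, cb0, cb1⟩) u =
      if u = (SCtl.q2, ⟨cs, ci, cr, ca0, m, cb0, cb1⟩) then α
      else if u = (SCtl.q1, ⟨cs, ci, cr, ca0, m + 1, cb0 + 1, cb1⟩) then 1 - α
      else 0 :=
  fun _ => rfl

lemma row_q3 (c : Cnt) :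
    ∀ u, sirP α β (SCtl.q3, c) u = if u = (SCtl.q4, { c with a1 := c.i }) then 1 else 0 :=
  fun _ => rfl

lemma row_q4_zero (cs ci cr ca0 cb0 cb1 : ℕ) :
    ∀ u, sirP α β (SCtl.q4, ⟨cs, ci, cr, ca0, 0, cb0, cb1⟩) u =
      if u = (SCtl.q5, ⟨cs, ci, cr, ca0, 0, cb0, cb1⟩) then 1 else 0 :=
  fun _ => rfl

lemma row_q4_succ (cs ci cr ca0 m cb0 cb1 : ℕ) :
    ∀ u, sirP α β (SCtl.q4, ⟨cs, ci, cr, ca0, m + 1, cb0, cb1⟩) u =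
      if u = (SCtl.q4, ⟨cs, ci, cr, ca0, m, cb0, cb1 + 1⟩) then β
      else if u = (SCtl.q4, ⟨cs, ci, cr, ca0, m, cb0, cb1⟩) then 1 - β
      else 0 :=
  fun _ => rfl

lemma row_q5 (cs ci cr ca0 ca1 cb0 cb1 : ℕ) :
    ∀ u, sirP α β (SCtl.q5, ⟨cs, ci, cr, ca0, ca1, cb0, cb1⟩) u =
      if u = (SCtl.q0, ⟨cs - cb0, ci + cb0 - cb1, cr + cb1, ca0, ca1, 0, 0⟩) then 1 else 0 :=
  fun _ => rfl

end rows

/-! ### Binomial recursion -/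

/-- `W p n j` is the probability of exactly `j` successes in `n` Bernoulli(`p`) trials. -/
noncomputable def W (p : ℝ) : ℕ → ℕ → ℝ
  | 0, 0 => 1
  | 0, _ + 1 => 0
  | n + 1, 0 => (1 - p) * W p n 0
  | n + 1, j + 1 => p * W p n j + (1 - p) * W p n (j + 1)

lemma W_zero_zero (p : ℝ) : W p 0 0 = 1 := by simp [W]

lemma W_zero_succ (p : ℝ) (j : ℕ) : W p 0 (j + 1) = 0 := by simp [W]

lemma W_succ_zero (p : ℝ) (n : ℕ) : W p (n + 1) 0 = (1 - p) * W p n 0 := by simp [W]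

lemma W_succ_succ (p : ℝ) (n j : ℕ) :
    W p (n + 1) (j + 1) = p * W p n j + (1 - p) * W p n (j + 1) := by simp [W]

lemma W_eq_binom (p : ℝ) : ∀ (n j : ℕ), W p n j = binomPMF j n p := by
  intro n
  induction n with
  | zero =>
      intro j
      cases j with
      | zero => simp [W, binomPMF]
      | succ k => simp [W, binomPMF, Nat.choose_eq_zero_of_lt]
  | succ n ih =>
      intro j
      cases j with
      | zero =>
          rw [W_succ_zero, ih 0]
          simp only [binomPMF, Nat.choose_zero_right, Nat.cast_one, pow_zero,
            Nat.sub_zero, pow_succ]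
          ring
      | succ k =>
          rw [W_succ_succ, ih k, ih (k + 1)]
          simp only [binomPMF, Nat.succ_sub_succ]
          rw [Nat.choose_succ_succ n k, Nat.cast_add]
          by_cases hk : k + 1 ≤ n
          · have h1 : n - k = (n - (k + 1)) + 1 := by omega
            rw [h1, pow_succ]
            ring
          · have h1 : n.choose (k + 1) = 0 := Nat.choose_eq_zero_of_lt (by omega)
            rw [h1]
            ring

end SirAux

section MainCalc

open SirAux

variable (α β : ℝ) (s i r b0 b1 : ℕ)

/-- The target state of the first return. -/
def tgtSt : SirSt := (SCtl.q0, ⟨s - b0, i + b0 - b1, r + b1, 0, 0, 0, 0⟩)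

lemma tgtSt_ctl : (tgtSt s i r b0 b1).1 = SCtl.q0 := rfl

lemma Fv_q5 (hb1 : b1 ≤ i) (k m : ℕ) :
    Fv α β (tgtSt s i r b0 b1) (SCtl.q5, ⟨s, i, r, 0, 0, k, m⟩) =
      if k = b0 ∧ m = b1 then 1 else 0 := by
  rw [Fv_det _ _ (row_q5 α β s i r 0 0 k m), Hv_q0 rfl]
  have hiff : ((SCtl.q0, (⟨s - k, i + k - m, r + m, 0, 0, 0, 0⟩ : Cnt)) =
      tgtSt s i r b0 b1) ↔ (k = b0 ∧ m = b1) := by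
    simp only [tgtSt, Prod.mk.injEq, Cnt.mk.injEq, true_and, and_true]
    omega
  simp only [hiff]

lemma Fv_q4 (hb1 : b1 ≤ i) :
    ∀ (n m k : ℕ), Fv α β (tgtSt s i r b0 b1) (SCtl.q4, ⟨s, i, r, 0, n, k, m⟩) =
      if k = b0 ∧ m ≤ b1 then W β n (b1 - m) else 0 := by
  intro n
  induction n with
  | zero =>
      intro m k
      rw [Fv_det _ _ (row_q4_zero α β s i r 0 k m),
        Hv_eq_Fv (tgtSt_ctl s i r b0 b1) (by simp),
        Fv_q5 α β s i r b0 b1 hb1 k m]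
      by_cases h1 : k = b0 ∧ m = b1
      · rw [if_pos h1, if_pos ⟨h1.1, le_of_eq h1.2⟩]
        have : b1 - m = 0 := by omega
        rw [this, W_zero_zero]
      · rw [if_neg h1]
        by_cases h2 : k = b0 ∧ m ≤ b1
        · rw [if_pos h2]
          have hm : m < b1 := by
            rcases h2 with ⟨hk, hm⟩
            rcases lt_or_eq_of_le hm with h | h
            · exact h
            · exact absurd ⟨hk, h⟩ h1
          obtain ⟨j, hj⟩ : ∃ j, b1 - m = j + 1 := ⟨b1 - m - 1, by omega⟩
          rw [hj, W_zero_succ]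
        · rw [if_neg h2]
  | succ n ih =>
      intro m k
      rw [Fv_branch (tgtSt_ctl s i r b0 b1) _ _ _ β
        (by simp) (row_q4_succ α β s i r 0 n k m),
        Hv_eq_Fv (tgtSt_ctl s i r b0 b1) (by simp),
        Hv_eq_Fv (tgtSt_ctl s i r b0 b1) (by simp),
        ih (m + 1) k, ih m k]
      by_cases hk : k = b0
      · by_cases hm : m ≤ b1
        · rcases lt_or_eq_of_le hm with hlt | heq
          · obtain ⟨j, hj⟩ : ∃ j, b1 - m = j + 1 := ⟨b1 - m - 1, by omega⟩
            simp only [if_pos (show k = b0 ∧ m ≤ b1 by omega),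
              if_pos (show k = b0 ∧ m + 1 ≤ b1 by omega)]
            rw [hj, show b1 - (m + 1) = j by omega, W_succ_succ]
          · simp only [if_pos (show k = b0 ∧ m ≤ b1 by omega),
              if_neg (show ¬(k = b0 ∧ m + 1 ≤ b1) by omega),
              show b1 - m = 0 by omega, W_succ_zero]
            ring
        · simp only [if_neg (show ¬(k = b0 ∧ m ≤ b1) by omega),
            if_neg (show ¬(k = b0 ∧ m + 1 ≤ b1) by omega)]
          ring
      · simp only [if_neg (show ¬(k = b0 ∧ m ≤ b1) by omega),
          if_neg (show ¬(k = b0 ∧ m + 1 ≤ b1) by omega)]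
        ring

lemma Fv_q1 (hb1 : b1 ≤ i) :
    ∀ (n a k : ℕ), Fv α β (tgtSt s i r b0 b1) (SCtl.q1, ⟨s, i, r, n, a, k, 0⟩) =
      (if k ≤ b0 then W (1 - α ^ i) n (b0 - k) else 0) * W β i b1 := by
  intro n
  induction n with
  | zero =>
      intro a k
      rw [Fv_det _ _ (row_q1_zero α β s i r a k 0),
        Hv_eq_Fv (tgtSt_ctl s i r b0 b1) (by simp),
        Fv_det _ _ (row_q3 α β ⟨s, i, r, 0, a, k, 0⟩),
        Hv_eq_Fv (tgtSt_ctl s i r b0 b1) (by simp)]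
      show Fv α β (tgtSt s i r b0 b1) (SCtl.q4, ⟨s, i, r, 0, i, k, 0⟩) = _
      rw [Fv_q4 α β s i r b0 b1 hb1 i 0 k]
      simp only [Nat.sub_zero, Nat.zero_le, and_true]
      by_cases hk : k = b0
      · rw [if_pos hk, if_pos (le_of_eq hk)]
        have : b0 - k = 0 := by omega
        rw [this, W_zero_zero]
        ring
      · rw [if_neg hk]
        by_cases hk2 : k ≤ b0
        · rw [if_pos hk2]
          obtain ⟨j, hj⟩ : ∃ j, b0 - k = j + 1 := ⟨b0 - k - 1, by omega⟩
          rw [hj, W_zero_succ]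
          ring
        · rw [if_neg hk2]
          ring
  | succ n ih =>
      intro a k
      rw [Fv_det _ _ (row_q1_succ α β s i r n a k 0),
        Hv_eq_Fv (tgtSt_ctl s i r b0 b1) (by simp)]
      -- the inner q2-loop computation
      have key : ∀ (m k : ℕ), Fv α β (tgtSt s i r b0 b1) (SCtl.q2, ⟨s, i, r, n, m, k, 0⟩) =
          α ^ m * ((if k ≤ b0 then W (1 - α ^ i) n (b0 - k) else 0) * W β i b1) +
            (1 - α ^ m) *
              ((if k + 1 ≤ b0 then W (1 - α ^ i) n (b0 - (k + 1)) else 0) * W β i b1) := by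
        intro m
        induction m with
        | zero =>
            intro k
            rw [Fv_det _ _ (row_q2_zero α β s i r n k 0),
              Hv_eq_Fv (tgtSt_ctl s i r b0 b1) (by simp),
              ih 0 k, pow_zero]
            ring
        | succ m ihm =>
            intro k
            rw [Fv_branch (tgtSt_ctl s i r b0 b1) _ _ _ α
              (by simp) (row_q2_succ α β s i r n m k 0),
              Hv_eq_Fv (tgtSt_ctl s i r b0 b1) (by simp),
              Hv_eq_Fv (tgtSt_ctl s i r b0 b1) (by simp),
              ihm k, ih (m + 1) (k + 1), pow_succ]
            ring
      rw [key i k]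
      -- now the Pascal-type identity for U
      by_cases hk : k ≤ b0
      · rcases lt_or_eq_of_le hk with hlt | heq
        · obtain ⟨j, hj⟩ : ∃ j, b0 - k = j + 1 := ⟨b0 - k - 1, by omega⟩
          simp only [if_pos hk, if_pos (show k + 1 ≤ b0 by omega)]
          rw [hj, show b0 - (k + 1) = j by omega, W_succ_succ]
          ring
        · simp only [if_pos hk, if_neg (show ¬ k + 1 ≤ b0 by omega),
            show b0 - k = 0 by omega, W_succ_zero]
          ring
      · simp only [if_neg hk, if_neg (show ¬ k + 1 ≤ b0 by omega)]
        ring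

end MainCalc

/-- In the SCM of the SIR model, started at `q0` with counters
`(s, i, r, 0, 0, 0, 0)`, for all `b0 ≤ s` and `b1 ≤ i`, the probability that the first
return to `q0` has counters `(s - b0, i + b0 - b1, r + b1, 0, 0, 0, 0)` equals
`Pr(b0; s, 1 - α^i) · Pr(b1; i, β)`; that is, `b0` is distributed as `B(s, 1 - α^i)`,
`b1` is independently distributed as `B(i, β)`, and one traversal from `q0` back to `q0`
simulates exactly one time-step of the stochastic SIR compartmental model with these
rates. -/
theorem sir_scm_one_step (α β : ℝ) (hα : α ∈ Set.Icc (0 : ℝ) 1)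
    (hβ : β ∈ Set.Icc (0 : ℝ) 1) (s i r b0 b1 : ℕ) (hb0 : b0 ≤ s) (hb1 : b1 ≤ i) :
    firstReturnProb α β (SCtl.q0, ⟨s, i, r, 0, 0, 0, 0⟩)
        (SCtl.q0, ⟨s - b0, i + b0 - b1, r + b1, 0, 0, 0, 0⟩)
      = binomPMF b0 s (1 - α ^ i) * binomPMF b1 i β := by
  have htgt : (tgtSt s i r b0 b1).1 = SCtl.q0 := rfl
  have heq : ((SCtl.q0, (⟨s - b0, i + b0 - b1, r + b1, 0, 0, 0, 0⟩ : Cnt)) : SirSt) =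
      tgtSt s i r b0 b1 := rfl
  rw [heq, SirAux.firstReturnProb_eq]
  show SirAux.Fv α β (tgtSt s i r b0 b1) (SCtl.q0, ⟨s, i, r, 0, 0, 0, 0⟩) = _
  rw [SirAux.Fv_det _ _ (SirAux.row_q0 α β ⟨s, i, r, 0, 0, 0, 0⟩),
    SirAux.Hv_eq_Fv htgt (by simp)]
  show SirAux.Fv α β (tgtSt s i r b0 b1) (SCtl.q1, ⟨s, i, r, s, 0, 0, 0⟩) = _
  rw [Fv_q1 α β s i r b0 b1 hb1 s 0 0, if_pos (Nat.zero_le b0), Nat.sub_zero,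
    SirAux.W_eq_binom, SirAux.W_eq_binom]
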